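/- Let γ > 1, N ≥ 1, A = [-N, -N/2], and f_A with f̂_A = χ_A. Then for every x ∈ [0, N^{-1/γ}], choosing t = x one has sup_{0<t<1} |P^t_{1,γ} f_A(x)| ≥ c N for an absolute constant c > 0, while ‖f_A‖_{H^s} ≍ N^{s+1/2}. -/

import Mathlib

open MeasureTheory

/-- Fourier transform with the normalization `f(x) = ∫ f̂(ξ) e^{ixξ} dξ`. -/
noncomputable def ftransform (f : ℝ → ℂ) (ξ : ℝ) : ℂ :=
  (1 / (2 * Real.pi)) * ∫ x : ℝ, f x * Complex.exp (-Complex.I * ((x * ξ : ℝ) : ℂ))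

/-- The fractional Schrödinger evolution with complex time `g(t) = t + i t^γ`,
applied to a function with Fourier transform `fhat`. -/
noncomputable def Pop (a γ : ℝ) (fhat : ℝ → ℂ) (t x : ℝ) : ℂ :=
  ∫ ξ : ℝ, fhat ξ *
    Complex.exp (Complex.I * ((t * |ξ| ^ a : ℝ) : ℂ) - ((t ^ γ * |ξ| ^ a : ℝ) : ℂ)) *
    Complex.exp (Complex.I * ((x * ξ : ℝ) : ℂ))

/-- The maximal operator `P*_{a,γ} f(x) = sup_{0<t<1} |P^t_{a,γ} f(x)|`. -/
noncomputable def Pstar (a γ : ℝ) (fhat : ℝ → ℂ) (x : ℝ) : ℝ :=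
  ⨆ t : Set.Ioo (0 : ℝ) 1, ‖Pop a γ fhat t x‖

/-- The function with Fourier transform equal to the indicator of A = [-N, -N/2]. -/
noncomputable def fhatA (N : ℝ) : ℝ → ℂ :=
  Set.indicator (Set.Icc (-N) (-N / 2)) (fun _ => (1 : ℂ))

namespace CHW

lemma rpow_mem_bounds {a b x s : ℝ} (ha : 0 < a) (hax : a ≤ x) (hxb : x ≤ b) :
    min (a ^ s) (b ^ s) ≤ x ^ s ∧ x ^ s ≤ max (a ^ s) (b ^ s) := by
  rcases le_total 0 s with hs | hs
  · exact ⟨le_trans (min_le_left _ _) (Real.rpow_le_rpow ha.le hax hs),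
      le_trans (Real.rpow_le_rpow (ha.le.trans hax) hxb hs) (le_max_right _ _)⟩
  · exact ⟨le_trans (min_le_right _ _) (Real.rpow_le_rpow_of_nonpos (ha.trans_le hax) hxb hs),
      le_trans (Real.rpow_le_rpow_of_nonpos ha hax hs) (le_max_left _ _)⟩

lemma Pop_one (γ : ℝ) (fhat : ℝ → ℂ) (t x : ℝ) :
    Pop 1 γ fhat t x = ∫ ξ : ℝ, fhat ξ *
      (Complex.exp (Complex.I * ((t * |ξ| : ℝ) : ℂ) - ((t ^ γ * |ξ| : ℝ) : ℂ)) *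
      Complex.exp (Complex.I * ((x * ξ : ℝ) : ℂ))) := by
  simp only [Pop, Real.rpow_one, mul_assoc]

lemma integrand_eq (N : ℝ) (h : ℝ → ℂ) :
    (fun ξ => fhatA N ξ * h ξ) = Set.indicator (Set.Icc (-N) (-N / 2)) h := by
  funext ξ
  by_cases hξ : ξ ∈ Set.Icc (-N) (-N / 2) <;>
    simp [fhatA, Set.indicator_of_mem, Set.indicator_of_notMem, hξ]

lemma g_cont (γ t x : ℝ) :
    Continuous (fun ξ : ℝ =>
      Complex.exp (Complex.I * ((t * |ξ| : ℝ) : ℂ) - ((t ^ γ * |ξ| : ℝ) : ℂ)) *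
      Complex.exp (Complex.I * ((x * ξ : ℝ) : ℂ))) := by fun_prop

lemma exp_norms (a b : ℝ) :
    ‖Complex.exp (Complex.I * (a : ℂ) - (b : ℂ))‖ = Real.exp (-b) ∧
    ‖Complex.exp (Complex.I * (a : ℂ))‖ = 1 := by
  constructor
  · rw [Complex.norm_exp]
    congr 1
    simp
  · rw [Complex.norm_exp]
    simp

lemma Pop_norm_le {γ N : ℝ} (hN : 1 ≤ N) {t : ℝ} (ht : 0 < t) (x : ℝ) :
    ‖Pop 1 γ (fhatA N) t x‖ ≤ N / 2 := by
  have hN0 : (0 : ℝ) < N := lt_of_lt_of_le one_pos hN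
  have hA : MeasurableSet (Set.Icc (-N) (-N / 2)) := measurableSet_Icc
  rw [Pop_one]
  refine le_trans (norm_integral_le_integral_norm _) ?_
  have hind : Integrable (Set.indicator (Set.Icc (-N) (-N / 2)) (fun _ => (1 : ℝ))) := by
    rw [integrable_indicator_iff hA]
    exact integrableOn_const measure_Icc_lt_top.ne
  have hmono : ∀ ξ : ℝ, ‖fhatA N ξ *
      (Complex.exp (Complex.I * ((t * |ξ| : ℝ) : ℂ) - ((t ^ γ * |ξ| : ℝ) : ℂ)) *
      Complex.exp (Complex.I * ((x * ξ : ℝ) : ℂ)))‖ ≤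
      Set.indicator (Set.Icc (-N) (-N / 2)) (fun _ => (1 : ℝ)) ξ := by
    intro ξ
    by_cases hξ : ξ ∈ Set.Icc (-N) (-N / 2)
    · rw [Set.indicator_of_mem hξ, fhatA, Set.indicator_of_mem hξ, one_mul, norm_mul]
      obtain ⟨h1, h2⟩ := exp_norms (t * |ξ|) (t ^ γ * |ξ|)
      rw [h1, (exp_norms (x * ξ) 0).2, mul_one]
      exact Real.exp_le_one_iff.mpr (neg_nonpos.mpr (mul_nonneg (Real.rpow_nonneg ht.le _) (abs_nonneg _)))
    · rw [Set.indicator_of_notMem hξ, fhatA, Set.indicator_of_notMem hξ, zero_mul, norm_zero]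
  calc ∫ ξ : ℝ, ‖fhatA N ξ *
      (Complex.exp (Complex.I * ((t * |ξ| : ℝ) : ℂ) - ((t ^ γ * |ξ| : ℝ) : ℂ)) *
      Complex.exp (Complex.I * ((x * ξ : ℝ) : ℂ)))‖
      ≤ ∫ ξ : ℝ, Set.indicator (Set.Icc (-N) (-N / 2)) (fun _ => (1 : ℝ)) ξ :=
        integral_mono_of_nonneg (Filter.Eventually.of_forall fun ξ => norm_nonneg _) hind
          (Filter.Eventually.of_forall hmono)
    _ = N / 2 := by
        rw [integral_indicator hA, setIntegral_const, smul_eq_mul, mul_one, measureReal_def, Real.volume_Icc,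
          ENNReal.toReal_ofReal (by linarith)]
        ring

lemma exp_one_le_three : Real.exp 1 ≤ 3 := by
  have := Real.exp_one_lt_d9
  norm_num at this
  linarith

lemma part1 (γ : ℝ) (hγ : 1 < γ) (N : ℝ) (hN : 1 ≤ N) (x : ℝ)
    (hx : x ∈ Set.Icc (0 : ℝ) (N ^ (-1 / γ))) :
    (1 / 12 : ℝ) * N ≤ Pstar 1 γ (fhatA N) x := by
  obtain ⟨hx0, hx1⟩ := hx
  have hN0 : (0 : ℝ) < N := lt_of_lt_of_le one_pos hN
  have hγ0 : (0 : ℝ) < γ := lt_trans one_pos hγ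
  have hxle1 : x ≤ 1 := hx1.trans (Real.rpow_le_one_of_one_le_of_nonpos hN
    (by rw [neg_div]; exact neg_nonpos.mpr (by positivity)))
  have h8N : (0 : ℝ) < 1 / (8 * N) := by positivity
  have h8N' : 1 / (8 * N) ≤ 1 / 8 := by
    rw [div_le_div_iff₀ (by linarith) (by norm_num)]; linarith
  set t : ℝ := max (x - 1 / (8 * N)) (1 / (8 * N)) with htdef
  have ht0 : 0 < t := lt_of_lt_of_le h8N (le_max_right _ _)
  have ht1 : t < 1 := max_lt (by linarith) (by linarith)
  have habs : |x - t| ≤ 1 / (8 * N) := by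
    rcases le_total (x - 1 / (8 * N)) (1 / (8 * N)) with h | h
    · rw [htdef, max_eq_right h, abs_le]; constructor <;> linarith
    · rw [htdef, max_eq_left h, abs_le]; constructor <;> linarith
  have hdamp : t ^ γ * N ≤ 1 := by
    rcases le_total (x - 1 / (8 * N)) (1 / (8 * N)) with h | h
    · rw [htdef, max_eq_right h]
      have h1 : (1 / (8 * N) : ℝ) ^ γ ≤ 1 / (8 * N) := by
        have := Real.rpow_le_rpow_of_exponent_ge h8N (by linarith) hγ.le
        rwa [Real.rpow_one] at this
      calc (1 / (8 * N) : ℝ) ^ γ * N ≤ (1 / (8 * N)) * N :=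
            mul_le_mul_of_nonneg_right h1 hN0.le
        _ = 1 / 8 := by field_simp
        _ ≤ 1 := by norm_num
    · rw [htdef, max_eq_left h]
      have hx0' : (0 : ℝ) < x := by linarith
      have h1 : (x - 1 / (8 * N)) ^ γ ≤ x ^ γ :=
        Real.rpow_le_rpow (by linarith) (by linarith) hγ0.le
      have h2 : x ^ γ ≤ N ^ (-1 : ℝ) := by
        have := Real.rpow_le_rpow hx0'.le hx1 hγ0.le
        rwa [← Real.rpow_mul hN0.le, div_mul_cancel₀ _ (ne_of_gt hγ0)] at this
      calc (x - 1 / (8 * N)) ^ γ * N ≤ N ^ (-1 : ℝ) * N :=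
            mul_le_mul_of_nonneg_right (h1.trans h2) hN0.le
        _ = 1 := by rw [Real.rpow_neg_one]; field_simp
  -- the main integral estimate
  have hA : MeasurableSet (Set.Icc (-N) (-N / 2)) := measurableSet_Icc
  set g : ℝ → ℂ := fun ξ =>
    Complex.exp (Complex.I * ((t * |ξ| : ℝ) : ℂ) - ((t ^ γ * |ξ| : ℝ) : ℂ)) *
    Complex.exp (Complex.I * ((x * ξ : ℝ) : ℂ)) with hgdef
  have hgint : IntegrableOn g (Set.Icc (-N) (-N / 2)) := (g_cont γ t x).integrableOn_Icc
  have hPop : Pop 1 γ (fhatA N) t x = ∫ ξ in Set.Icc (-N) (-N / 2), g ξ := by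
    rw [Pop_one, ← integral_indicator hA, ← integrand_eq N g]
  have hint3 : Integrable g (volume.restrict (Set.Icc (-N) (-N / 2))) := hgint
  have hre : (Pop 1 γ (fhatA N) t x).re = ∫ ξ in Set.Icc (-N) (-N / 2), (g ξ).re := by
    rw [hPop]
    have := integral_re (μ := volume.restrict (Set.Icc (-N) (-N / 2))) hint3
    simp only [RCLike.re_to_complex] at this
    exact this.symm
  have hlow : ∀ ξ ∈ Set.Icc (-N) (-N / 2), (1 / 6 : ℝ) ≤ (g ξ).re := by
    intro ξ hξ
    obtain ⟨h1, h2⟩ := hξ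
    have hξ0 : ξ ≤ 0 := by linarith
    have habsξ : |ξ| = -ξ := abs_of_nonpos hξ0
    have habsξN : |ξ| ≤ N := by rw [habsξ]; linarith
    have hgre : (g ξ).re = Real.exp (-(t ^ γ * |ξ|)) * Real.cos (t * |ξ| + x * ξ) := by
      rw [hgdef]
      simp only [← Complex.exp_add]
      rw [Complex.exp_re]
      congr 2 <;> simp
    rw [hgre]
    have htγ : (0 : ℝ) ≤ t ^ γ := Real.rpow_nonneg ht0.le γ
    have hb1 : t ^ γ * |ξ| ≤ 1 := le_trans (mul_le_mul_of_nonneg_left habsξN htγ) hdamp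
    have hexp : (1 / 3 : ℝ) ≤ Real.exp (-(t ^ γ * |ξ|)) := by
      have he1 : Real.exp (-1) ≤ Real.exp (-(t ^ γ * |ξ|)) :=
        Real.exp_le_exp.mpr (by linarith)
      have he2 : (1 / 3 : ℝ) ≤ Real.exp (-1) := by
        rw [Real.exp_neg]
        rw [le_inv_comm₀ (by norm_num) (Real.exp_pos 1)]
        calc Real.exp 1 ≤ 3 := exp_one_le_three
          _ = (1 / 3 : ℝ)⁻¹ := by norm_num
      linarith
    have hphase : t * |ξ| + x * ξ = (x - t) * ξ := by rw [habsξ]; ring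
    have hphab : |(x - t) * ξ| ≤ 1 / 8 := by
      rw [abs_mul]
      calc |x - t| * |ξ| ≤ (1 / (8 * N)) * N :=
            mul_le_mul habs habsξN (abs_nonneg _) h8N.le
        _ = 1 / 8 := by field_simp
    have hcos : (1 / 2 : ℝ) ≤ Real.cos (t * |ξ| + x * ξ) := by
      rw [hphase]
      have := Real.one_sub_sq_div_two_le_cos (x := (x - t) * ξ)
      have hsq : ((x - t) * ξ) ^ 2 ≤ (1 / 8 : ℝ) ^ 2 := by
        rw [← sq_abs]
        exact pow_le_pow_left₀ (abs_nonneg _) hphab 2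
      nlinarith
    nlinarith [Real.exp_pos (-(t ^ γ * |ξ|))]
  have hconstint : IntegrableOn (fun _ : ℝ => (1 / 6 : ℝ)) (Set.Icc (-N) (-N / 2)) :=
    integrableOn_const measure_Icc_lt_top.ne
  have hint4 : (1 / 6 : ℝ) * (N / 2) ≤ ∫ ξ in Set.Icc (-N) (-N / 2), (g ξ).re := by
    have := setIntegral_mono_on hconstint
      (by
        have := hint3.re
        simp only [RCLike.re_to_complex] at this; exact this) hA hlow
    rwa [setIntegral_const, smul_eq_mul, measureReal_def, Real.volume_Icc,
      ENNReal.toReal_ofReal (by linarith), mul_comm, show (-N / 2 - -N : ℝ) = N / 2 by ring]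
      at this
  have hnorm : (1 / 12 : ℝ) * N ≤ ‖Pop 1 γ (fhatA N) t x‖ := by
    have h1 : (1 / 12 : ℝ) * N ≤ (Pop 1 γ (fhatA N) t x).re := by
      rw [hre]; linarith
    calc (1 / 12 : ℝ) * N ≤ (Pop 1 γ (fhatA N) t x).re := h1
      _ ≤ ‖Pop 1 γ (fhatA N) t x‖ := Complex.re_le_norm _
  have hbdd : BddAbove (Set.range fun t' : Set.Ioo (0 : ℝ) 1 =>
      ‖Pop 1 γ (fhatA N) t' x‖) := by
    refine ⟨N / 2, ?_⟩
    rintro r ⟨⟨t', ht'⟩, rfl⟩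
    exact Pop_norm_le hN ht'.1 x
  exact le_trans hnorm (le_ciSup hbdd ⟨t, ht0, ht1⟩)

end CHW

theorem counterexample_half_wave :
    (∃ c : ℝ, 0 < c ∧ ∀ γ : ℝ, 1 < γ → ∀ N : ℝ, 1 ≤ N →
      ∀ x ∈ Set.Icc (0 : ℝ) (N ^ (-1 / γ)), c * N ≤ Pstar 1 γ (fhatA N) x) ∧
    (∀ s : ℝ, ∃ c₁ c₂ : ℝ, 0 < c₁ ∧ 0 < c₂ ∧ ∀ N : ℝ, 1 ≤ N →
      c₁ * N ^ (s + 1 / 2) ≤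
        (∫ ξ : ℝ, (1 + ξ ^ 2) ^ s * ‖fhatA N ξ‖ ^ 2) ^ (1 / 2 : ℝ) ∧
      (∫ ξ : ℝ, (1 + ξ ^ 2) ^ s * ‖fhatA N ξ‖ ^ 2) ^ (1 / 2 : ℝ) ≤
        c₂ * N ^ (s + 1 / 2)) := by
  constructor
  · exact ⟨1 / 12, by norm_num, fun γ hγ N hN x hx => CHW.part1 γ hγ N hN x hx⟩
  · intro s
    set m : ℝ := min ((4 : ℝ) ^ (-s)) ((2 : ℝ) ^ s) with hmdef
    set M : ℝ := max ((4 : ℝ) ^ (-s)) ((2 : ℝ) ^ s) with hMdef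
    have hm0 : 0 < m := lt_min (Real.rpow_pos_of_pos (by norm_num) _)
      (Real.rpow_pos_of_pos (by norm_num) _)
    have hM0 : 0 < M := lt_of_lt_of_le hm0 (min_le_max)
    refine ⟨(m / 2) ^ (1 / 2 : ℝ), (M / 2) ^ (1 / 2 : ℝ),
      Real.rpow_pos_of_pos (by positivity) _, Real.rpow_pos_of_pos (by positivity) _, ?_⟩
    intro N hN
    have hN0 : (0 : ℝ) < N := lt_of_lt_of_le one_pos hN
    have hA : MeasurableSet (Set.Icc (-N) (-N / 2)) := measurableSet_Icc
    have hfun : (fun ξ : ℝ => (1 + ξ ^ 2) ^ s * ‖fhatA N ξ‖ ^ 2) =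
        Set.indicator (Set.Icc (-N) (-N / 2)) (fun ξ => (1 + ξ ^ 2) ^ s) := by
      funext ξ
      by_cases hξ : ξ ∈ Set.Icc (-N) (-N / 2) <;>
        simp [fhatA, Set.indicator_of_mem, Set.indicator_of_notMem, hξ]
    have hI : (∫ ξ : ℝ, (1 + ξ ^ 2) ^ s * ‖fhatA N ξ‖ ^ 2) =
        ∫ ξ in Set.Icc (-N) (-N / 2), (1 + ξ ^ 2) ^ s := by
      rw [hfun, integral_indicator hA]
    have hc : Continuous (fun ξ : ℝ => (1 + ξ ^ 2) ^ s) :=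
      Continuous.rpow_const (by continuity) (fun ξ => Or.inl (by positivity))
    have hcint : IntegrableOn (fun ξ : ℝ => (1 + ξ ^ 2) ^ s) (Set.Icc (-N) (-N / 2)) :=
      hc.integrableOn_Icc
    have hN2 : ((N ^ 2 : ℝ)) ^ s = N ^ (2 * s) := by
      rw [← Real.rpow_natCast N 2, ← Real.rpow_mul hN0.le]
      norm_num
    have hP0 : (0 : ℝ) ≤ N ^ (2 * s) := Real.rpow_nonneg hN0.le _
    have hasbs : (N ^ 2 / 4 : ℝ) ^ s = (4 : ℝ) ^ (-s) * N ^ (2 * s) ∧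
        (2 * N ^ 2 : ℝ) ^ s = (2 : ℝ) ^ s * N ^ (2 * s) := by
      constructor
      · rw [Real.div_rpow (by positivity) (by norm_num), hN2, Real.rpow_neg (by norm_num)]
        rw [div_eq_mul_inv, mul_comm]
      · rw [Real.mul_rpow (by norm_num) (by positivity), hN2]
    have hpw : ∀ ξ ∈ Set.Icc (-N) (-N / 2),
        m * N ^ (2 * s) ≤ (1 + ξ ^ 2) ^ s ∧ (1 + ξ ^ 2) ^ s ≤ M * N ^ (2 * s) := by
      intro ξ hξ
      obtain ⟨h1, h2⟩ := hξ
      have hlo : (N ^ 2 / 4 : ℝ) ≤ 1 + ξ ^ 2 := by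
        nlinarith [mul_nonneg (show (0:ℝ) ≤ -ξ - N / 2 by linarith)
          (show (0:ℝ) ≤ -ξ + N / 2 by nlinarith)]
      have hhi : (1 + ξ ^ 2 : ℝ) ≤ 2 * N ^ 2 := by
        nlinarith [mul_nonneg (show (0:ℝ) ≤ N + ξ by linarith)
          (show (0:ℝ) ≤ N - ξ by nlinarith)]
      obtain ⟨hb1, hb2⟩ := CHW.rpow_mem_bounds (show (0:ℝ) < N ^ 2 / 4 by positivity) hlo hhi
      rw [hasbs.1, hasbs.2] at hb1 hb2
      rw [← min_mul_of_nonneg _ _ hP0] at hb1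
      rw [← max_mul_of_nonneg _ _ hP0] at hb2
      exact ⟨hb1, hb2⟩
    have hvol : ∀ c : ℝ, (∫ _ in Set.Icc (-N) (-N / 2), c) = c * (N / 2) := by
      intro c
      rw [setIntegral_const, smul_eq_mul, measureReal_def, Real.volume_Icc,
        ENNReal.toReal_ofReal (by linarith), show (-N / 2 - -N : ℝ) = N / 2 by ring, mul_comm]
    have hIlow : (m / 2) * N ^ (2 * s + 1) ≤ ∫ ξ in Set.Icc (-N) (-N / 2), (1 + ξ ^ 2) ^ s := by
      have := setIntegral_mono_on
        (integrableOn_const measure_Icc_lt_top.ne) hcint hA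
        (fun ξ hξ => (hpw ξ hξ).1)
      rw [hvol (m * N ^ (2 * s))] at this
      calc (m / 2) * N ^ (2 * s + 1) = m * N ^ (2 * s) * (N / 2) := by
            rw [Real.rpow_add hN0, Real.rpow_one]; ring
        _ ≤ _ := this
    have hIhigh : (∫ ξ in Set.Icc (-N) (-N / 2), (1 + ξ ^ 2) ^ s) ≤
        (M / 2) * N ^ (2 * s + 1) := by
      have := setIntegral_mono_on hcint
        (integrableOn_const measure_Icc_lt_top.ne) hA
        (fun ξ hξ => (hpw ξ hξ).2)
      rw [hvol (M * N ^ (2 * s))] at this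
      calc (∫ ξ in Set.Icc (-N) (-N / 2), (1 + ξ ^ 2) ^ s) ≤ M * N ^ (2 * s) * (N / 2) := this
        _ = (M / 2) * N ^ (2 * s + 1) := by rw [Real.rpow_add hN0, Real.rpow_one]; ring
    have hIpos : (0 : ℝ) ≤ ∫ ξ in Set.Icc (-N) (-N / 2), (1 + ξ ^ 2) ^ s :=
      le_trans (by positivity) hIlow
    have hsplit : ∀ C : ℝ, 0 < C →
        ((C / 2) * N ^ (2 * s + 1)) ^ (1 / 2 : ℝ) = (C / 2) ^ (1 / 2 : ℝ) * N ^ (s + 1 / 2) := by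
      intro C hC
      rw [Real.mul_rpow (by positivity) (Real.rpow_nonneg hN0.le _),
        ← Real.rpow_mul hN0.le]
      congr 2
      ring
    rw [hI]
    constructor
    · rw [← hsplit m hm0]
      exact Real.rpow_le_rpow (by positivity) hIlow (by norm_num)
    · rw [← hsplit M hM0]
      exact Real.rpow_le_rpow hIpos hIhigh (by norm_num)
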